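/- Let a > 0 and c > 0. Define g(z) = a·(φ(z) − z·Φᶜ(z)) − c and w(z) = (a·φ(z) − c)/Φᶜ(z) for z ∈ ℝ. Then: (i) g is strictly decreasing on ℝ, with g(z) → +∞ as z → −∞ and g(z) → −c as z → +∞, so g has a unique zero z*; and (ii) z* is the unique global maximizer of w on ℝ. -/

import Mathlib

open MeasureTheory ProbabilityTheory Real

/-- Standard normal density. -/
noncomputable def stdPdf (x : ℝ) : ℝ := (Real.sqrt (2 * Real.pi))⁻¹ * Real.exp (-(x ^ 2) / 2)

/-- Standard normal CDF. -/
noncomputable def stdCdf (x : ℝ) : ℝ := ∫ u in Set.Iic x, stdPdf u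

/-- Standard normal complementary CDF. -/
noncomputable def stdCcdf (x : ℝ) : ℝ := 1 - stdCdf x

/-- Standard normal hazard rate. -/
noncomputable def hazard (x : ℝ) : ℝ := stdPdf x / stdCcdf x

open Filter

lemma stdPdf_pos (x : ℝ) : 0 < stdPdf x := by
  unfold stdPdf
  have h2 : (0:ℝ) < 2 * Real.pi := by positivity
  positivity

lemma continuous_stdPdf : Continuous stdPdf := by
  unfold stdPdf
  fun_prop

lemma integrable_stdPdf : Integrable stdPdf := by
  have h := (integrable_exp_neg_mul_sq (b := (1:ℝ)/2) (by norm_num)).const_mul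
    (Real.sqrt (2 * Real.pi))⁻¹
  refine h.congr ?_
  filter_upwards with x
  unfold stdPdf
  ring_nf

lemma integral_stdPdf : ∫ x, stdPdf x = 1 := by
  have h : ∫ x : ℝ, Real.exp (-(1/2) * x ^ 2) = Real.sqrt (Real.pi / (1/2)) :=
    integral_gaussian (1/2)
  have h2 : (fun x : ℝ => stdPdf x) =
      fun x => (Real.sqrt (2 * Real.pi))⁻¹ * Real.exp (-(1/2) * x ^ 2) := by
    funext x; unfold stdPdf; ring_nf
  rw [h2, MeasureTheory.integral_const_mul, h]
  rw [show Real.pi / (1/2) = 2 * Real.pi by ring]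
  rw [inv_mul_cancel₀]
  positivity

lemma hasDerivAt_stdPdf (x : ℝ) : HasDerivAt stdPdf (-(x * stdPdf x)) x := by
  have h1 : HasDerivAt (fun y : ℝ => -(y ^ 2) / 2) (-x) x := by
    have := ((hasDerivAt_pow 2 x).neg).div_const 2
    refine this.congr_deriv ?_
    ring
  have h2 := (h1.exp).const_mul (Real.sqrt (2 * Real.pi))⁻¹
  have h3 : -(x * stdPdf x) = (Real.sqrt (2 * Real.pi))⁻¹ * (Real.exp (-(x ^ 2) / 2) * -x) := by
    simp only [stdPdf]; ring
  rw [h3]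
  exact h2

lemma hasDerivAt_stdCdf (x : ℝ) : HasDerivAt stdCdf (stdPdf x) x := by
  have key : stdCdf = fun y => stdCdf 0 + ∫ u in (0:ℝ)..y, stdPdf u := by
    funext y
    have h := intervalIntegral.integral_Iic_sub_Iic (f := stdPdf) (μ := volume) (a := 0) (b := y)
      integrable_stdPdf.integrableOn integrable_stdPdf.integrableOn
    unfold stdCdf
    linarith
  rw [key]
  have h := intervalIntegral.integral_hasDerivAt_right
    (f := stdPdf) (a := 0) (b := x)
    (integrable_stdPdf.intervalIntegrable)
    (continuous_stdPdf.stronglyMeasurable.stronglyMeasurableAtFilter)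
    (continuous_stdPdf.continuousAt)
  exact h.const_add _

lemma hasDerivAt_stdCcdf (x : ℝ) : HasDerivAt stdCcdf (-stdPdf x) x :=
  (hasDerivAt_stdCdf x).const_sub 1

lemma stdCcdf_eq (x : ℝ) : stdCcdf x = ∫ u in Set.Ioi x, stdPdf u := by
  have h := intervalIntegral.integral_Iic_add_Ioi (f := stdPdf) (μ := volume) (b := x)
    integrable_stdPdf.integrableOn integrable_stdPdf.integrableOn
  rw [integral_stdPdf] at h
  unfold stdCcdf stdCdf
  linarith

lemma stdCcdf_pos (x : ℝ) : 0 < stdCcdf x := by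
  rw [stdCcdf_eq]
  rw [MeasureTheory.setIntegral_pos_iff_support_of_nonneg_ae
    (Filter.Eventually.of_forall fun y => (stdPdf_pos y).le)
    integrable_stdPdf.integrableOn]
  have hsupp : Function.support stdPdf = Set.univ := by
    ext y; simp [Function.mem_support, (stdPdf_pos y).ne']
  rw [hsupp, Set.univ_inter, Real.volume_Ioi]
  simp

lemma stdPdf_tendsto_atTop : Tendsto stdPdf atTop (nhds 0) := by
  have h1 : Tendsto (fun x : ℝ => -(x ^ 2) / 2) atTop atBot := by
    apply Tendsto.atBot_div_const (by norm_num)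
    exact tendsto_neg_atTop_atBot.comp (tendsto_pow_atTop (by norm_num))
  have h2 := Real.tendsto_exp_atBot.comp h1
  have h3 := h2.const_mul ((Real.sqrt (2 * Real.pi))⁻¹)
  rw [mul_zero] at h3
  exact h3.congr fun x => rfl

lemma stdPdf_tendsto_atBot : Tendsto stdPdf atBot (nhds 0) := by
  have key : stdPdf = fun x => stdPdf (-x) := by
    funext x; unfold stdPdf; ring_nf
  rw [key]
  exact stdPdf_tendsto_atTop.comp tendsto_neg_atBot_atTop

lemma integrable_id_mul_stdPdf : Integrable (fun u : ℝ => u * stdPdf u) := by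
  have h := (integrable_mul_exp_neg_mul_sq (b := (1:ℝ)/2) (by norm_num)).const_mul
    (Real.sqrt (2 * Real.pi))⁻¹
  refine h.congr ?_
  filter_upwards with x
  unfold stdPdf
  ring_nf

lemma integral_Ioi_id_mul_stdPdf (x : ℝ) :
    ∫ u in Set.Ioi x, u * stdPdf u = stdPdf x := by
  have h := MeasureTheory.integral_Ioi_of_hasDerivAt_of_tendsto
    (f := fun u => -stdPdf u) (f' := fun u => u * stdPdf u) (a := x) (m := 0)
    (continuous_stdPdf.neg.continuousWithinAt)
    (fun y _ => (hasDerivAt_stdPdf y).neg.congr_deriv (by ring))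
    integrable_id_mul_stdPdf.integrableOn
    (by simpa using stdPdf_tendsto_atTop.neg)
  simpa using h

lemma mul_stdCcdf_le (x : ℝ) : x * stdCcdf x ≤ stdPdf x := by
  rcases le_or_gt x 0 with hx | hx
  · have : x * stdCcdf x ≤ 0 := mul_nonpos_of_nonpos_of_nonneg hx (stdCcdf_pos x).le
    linarith [stdPdf_pos x]
  · have h1 : x * stdCcdf x = ∫ u in Set.Ioi x, x * stdPdf u := by
      rw [MeasureTheory.integral_const_mul, ← stdCcdf_eq]
    rw [h1, ← integral_Ioi_id_mul_stdPdf x]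
    apply MeasureTheory.setIntegral_mono_on
      (integrable_stdPdf.const_mul x).integrableOn
      integrable_id_mul_stdPdf.integrableOn
      measurableSet_Ioi
    intro u hu
    exact mul_le_mul_of_nonneg_right (le_of_lt hu) (stdPdf_pos u).le

lemma stdCcdf_tendsto_atBot : Tendsto stdCcdf atBot (nhds 1) := by
  have hc : AECover (volume : Measure ℝ) atBot (fun x : ℝ => Set.Ioi x) :=
    MeasureTheory.aecover_Ioi tendsto_id
  have h := hc.integral_tendsto_of_countably_generated integrable_stdPdf
  rw [integral_stdPdf] at h
  exact h.congr fun x => (stdCcdf_eq x).symm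

/-- Properties of the principal's optimal-threshold equation: `g(z) = a·(φ(z) − z·Φᶜ(z)) − c`
is strictly decreasing, tends to `+∞` at `−∞` and to `−c` at `+∞`, has a unique zero `z*`,
and `z*` is the unique global maximizer of the per-hire net utility
`w(z) = (a·φ(z) − c)/Φᶜ(z)`. -/
theorem optimal_threshold_characterization (a c : ℝ) (ha : 0 < a) (hc : 0 < c) :
    StrictAnti (fun z : ℝ => a * (stdPdf z - z * stdCcdf z) - c) ∧
    Tendsto (fun z : ℝ => a * (stdPdf z - z * stdCcdf z) - c) atBot atTop ∧
    Tendsto (fun z : ℝ => a * (stdPdf z - z * stdCcdf z) - c) atTop (nhds (-c)) ∧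
    ∃ zstar : ℝ,
      (a * (stdPdf zstar - zstar * stdCcdf zstar) - c = 0) ∧
      (∀ z : ℝ, a * (stdPdf z - z * stdCcdf z) - c = 0 → z = zstar) ∧
      (∀ z : ℝ, z ≠ zstar →
        (a * stdPdf z - c) / stdCcdf z
          < (a * stdPdf zstar - c) / stdCcdf zstar) := by
  set G : ℝ → ℝ := fun z => a * (stdPdf z - z * stdCcdf z) - c with hGdef
  -- derivative of G
  have hG : ∀ z, HasDerivAt G (-(a * stdCcdf z)) z := by
    intro z
    have h2 : HasDerivAt (fun y : ℝ => y * stdCcdf y)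
        (1 * stdCcdf z + z * (-stdPdf z)) z :=
      (hasDerivAt_id z).mul (hasDerivAt_stdCcdf z)
    have h3 := (((hasDerivAt_stdPdf z).sub h2).const_mul a).sub_const c
    refine h3.congr_deriv ?_
    ring
  have hGanti : StrictAnti G := by
    apply strictAnti_of_deriv_neg
    intro z
    rw [(hG z).deriv]
    have := mul_pos ha (stdCcdf_pos z)
    linarith
  have hGcont : Continuous G := by
    rw [continuous_iff_continuousAt]
    exact fun z => (hG z).continuousAt
  -- limit at -∞
  have hGbot : Tendsto G atBot atTop := by
    have h1 : Tendsto (fun z : ℝ => (-z) * stdCcdf z) atBot atTop :=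
      Filter.Tendsto.atTop_mul_pos one_pos tendsto_neg_atBot_atTop stdCcdf_tendsto_atBot
    have h2 : Tendsto (fun z : ℝ => stdPdf z + (-z) * stdCcdf z) atBot atTop :=
      tendsto_atTop_mono (fun z => le_add_of_nonneg_left (stdPdf_pos z).le) h1
    have h3 : Tendsto (fun z : ℝ => a * (stdPdf z + (-z) * stdCcdf z) + (-c)) atBot atTop :=
      tendsto_atTop_add_const_right _ _ ((tendsto_const_mul_atTop_of_pos ha).mpr h2)
    refine h3.congr fun z => ?_
    simp only [hGdef]
    ring
  -- limit at +∞
  have hGtop : Tendsto G atTop (nhds (-c)) := by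
    have h0 : Tendsto (fun z : ℝ => stdPdf z - z * stdCcdf z) atTop (nhds 0) := by
      apply squeeze_zero' (g := stdPdf)
      · filter_upwards with z
        linarith [mul_stdCcdf_le z]
      · filter_upwards [eventually_ge_atTop (0:ℝ)] with z hz
        have : 0 ≤ z * stdCcdf z := mul_nonneg hz (stdCcdf_pos z).le
        linarith
      · exact stdPdf_tendsto_atTop
    have h1 := (h0.const_mul a).sub_const c
    simpa using h1
  refine ⟨hGanti, hGbot, hGtop, ?_⟩
  -- existence of the zero
  obtain ⟨x₁, hx₁⟩ := (hGbot.eventually (eventually_ge_atTop (1:ℝ))).exists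
  obtain ⟨x₂, hx₂⟩ := (hGtop.eventually_lt_const (by linarith : -c < (0:ℝ))).exists
  have hx12 : x₁ ≤ x₂ := by
    by_contra h
    push_neg at h
    have := hGanti h
    linarith
  have h0mem : (0:ℝ) ∈ Set.Icc (G x₂) (G x₁) := ⟨hx₂.le, by linarith⟩
  obtain ⟨zstar, hzmem, hzval⟩ := intermediate_value_Icc' hx12 hGcont.continuousOn h0mem
  refine ⟨zstar, hzval, fun z hz => hGanti.injective (by rw [hzval]; exact hz), ?_⟩
  -- the maximizer property
  set W : ℝ → ℝ := fun z => (a * stdPdf z - c) / stdCcdf z with hWdef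
  have hW : ∀ z, HasDerivAt W (stdPdf z * G z / (stdCcdf z) ^ 2) z := by
    intro z
    have hN : HasDerivAt (fun y : ℝ => a * stdPdf y - c) (a * (-(z * stdPdf z))) z :=
      ((hasDerivAt_stdPdf z).const_mul a).sub_const c
    have hDiv := hN.div (hasDerivAt_stdCcdf z) (stdCcdf_pos z).ne'
    refine hDiv.congr_deriv ?_
    simp only [hGdef]
    field_simp
    ring
  have hGsign_lt : ∀ z < zstar, 0 < G z := fun z hzlt => hzval ▸ hGanti hzlt
  have hGsign_gt : ∀ z, zstar < z → G z < 0 := fun z hzlt => hzval ▸ hGanti hzlt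
  have hWmono : StrictMonoOn W (Set.Iic zstar) := by
    apply strictMonoOn_of_deriv_pos (convex_Iic _)
      (fun x _ => (hW x).continuousAt.continuousWithinAt)
    intro x hx
    rw [interior_Iic] at hx
    rw [(hW x).deriv]
    exact div_pos (mul_pos (stdPdf_pos x) (hGsign_lt x hx)) (pow_pos (stdCcdf_pos x) 2)
  have hWanti : StrictAntiOn W (Set.Ici zstar) := by
    apply strictAntiOn_of_deriv_neg (convex_Ici _)
      (fun x _ => (hW x).continuousAt.continuousWithinAt)
    intro x hx
    rw [interior_Ici] at hx
    rw [(hW x).deriv]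
    have h1 := hGsign_gt x hx
    have h2 := stdPdf_pos x
    have h3 : (0:ℝ) < (stdCcdf x) ^ 2 := pow_pos (stdCcdf_pos x) 2
    exact div_neg_of_neg_of_pos (mul_neg_of_pos_of_neg h2 h1) h3
  intro z hz
  rcases lt_or_gt_of_ne hz with h | h
  · exact hWmono h.le (le_refl zstar) h
  · exact hWanti (le_refl zstar) h.le h
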